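/- Let X be a biquandle. Then (X, (▷^{[n]})_{n∈ℤ}, (▷̄^{[n]})_{n∈ℤ}) is a ℤ-family of biquandles; in particular, for all integers m, n and all a, b, c ∈ X: (a ▷^{[m]} b) ▷^{[n]} (c ▷̄^{[m]} b) = (a ▷^{[n]} c) ▷^{[m]} (b ▷^{[n]} c), (a ▷̄^{[m]} b) ▷^{[n]} (c ▷̄^{[m]} b) = (a ▷^{[n]} c) ▷̄^{[m]} (b ▷^{[n]} c), and (a ▷̄^{[m]} b) ▷̄^{[n]} (c ▷̄^{[m]} b) = (a ▷̄^{[n]} c) ▷̄^{[m]} (b ▷^{[n]} c). -/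

import Mathlib

/-- A biquandle: a set with two binary operations `u` (underline-star, `▷`) and
`o` (overline-star, `▷̄`) satisfying axioms (B1), (B2), (B3). -/
structure Biquandle (X : Type*) where
  u : X → X → X
  o : X → X → X
  b1 : ∀ x, u x x = o x x
  b2u : ∀ a, Function.Bijective fun x => u x a
  b2o : ∀ a, Function.Bijective fun x => o x a
  b2S : Function.Bijective fun p : X × X => (o p.2 p.1, u p.1 p.2)
  b3uu : ∀ x y z, u (u x y) (u z y) = u (u x z) (o y z)
  b3uo : ∀ x y z, o (u x y) (u z y) = u (o x z) (o y z)
  b3oo : ∀ x y z, o (o x y) (o z y) = o (o x z) (u y z)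

/-- Auxiliary predicate: the three exchange identities for the pair `(m, n)`. -/
def QQ {X : Type*} (pu po : ℤ → X → X → X) (m n : ℤ) : Prop :=
  (∀ a b c, pu n (pu m a b) (po m c b) = pu m (pu n a c) (pu n b c)) ∧
  (∀ a b c, pu n (po m a b) (po m c b) = po m (pu n a c) (pu n b c)) ∧
  (∀ a b c, po n (po m a b) (po m c b) = po m (po n a c) (pu n b c))

/-- A biquandle with its `n`-parallel operations is a `ℤ`-family of biquandles:
the three exchange identities hold for all `m, n : ℤ` (for `G = ℤ` abelian the
conjugate `h⁻¹gh` is just `g`), together with `a ▷^[n] a = a ▷̄^[n] a`; the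
composition rules and unit conditions are the defining equations. -/
theorem stmt19 {X : Type*} [Nonempty X] (B : Biquandle X)
    (pu po : ℤ → X → X → X)
    (pu0 : ∀ a b, pu 0 a b = a)
    (pu1 : ∀ a b, pu 1 a b = B.u a b)
    (purec : ∀ (i j : ℤ) a b, pu (i + j) a b = pu j (pu i a b) (pu i b b))
    (po0 : ∀ a b, po 0 a b = a)
    (po1 : ∀ a b, po 1 a b = B.o a b)
    (porec : ∀ (i j : ℤ) a b, po (i + j) a b = po j (po i a b) (po i b b)) :
    (∀ (m n : ℤ) (a b c : X),
      pu n (pu m a b) (po m c b) = pu m (pu n a c) (pu n b c)) ∧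
    (∀ (m n : ℤ) (a b c : X),
      pu n (po m a b) (po m c b) = po m (pu n a c) (pu n b c)) ∧
    (∀ (m n : ℤ) (a b c : X),
      po n (po m a b) (po m c b) = po m (po n a c) (pu n b c)) ∧
    (∀ (n : ℤ) (a : X), pu n a a = po n a a) := by
  -- cancellation lemmas
  have hpu_can : ∀ x y : X, pu (-1) (pu 1 x y) (pu 1 y y) = x := by
    intro x y
    have h := purec 1 (-1) x y
    rw [show (1 : ℤ) + -1 = 0 from by norm_num, pu0] at h
    exact h.symm
  have hpo_can : ∀ x y : X, po (-1) (po 1 x y) (po 1 y y) = x := by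
    intro x y
    have h := porec 1 (-1) x y
    rw [show (1 : ℤ) + -1 = 0 from by norm_num, po0] at h
    exact h.symm
  have hpu_can' : ∀ x y : X, pu 1 (pu (-1) x y) (pu (-1) y y) = x := by
    intro x y
    have h := purec (-1) 1 x y
    rw [show (-1 : ℤ) + 1 = 0 from by norm_num, pu0] at h
    exact h.symm
  have hpo_can' : ∀ x y : X, po 1 (po (-1) x y) (po (-1) y y) = x := by
    intro x y
    have h := porec (-1) 1 x y
    rw [show (-1 : ℤ) + 1 = 0 from by norm_num, po0] at h
    exact h.symm
  have hb1 : ∀ x : X, pu 1 x x = po 1 x x := by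
    intro x; rw [pu1, po1]; exact B.b1 x
  -- the diagonal identity for all n
  have hD : ∀ (n : ℤ) (a : X), pu n a a = po n a a := by
    intro n
    induction n using Int.induction_on with
    | zero => intro a; rw [pu0, po0]
    | succ i ih =>
        intro a
        calc pu ((i : ℤ) + 1) a a = pu 1 (pu i a a) (pu i a a) := purec i 1 a a
          _ = po 1 (po i a a) (po i a a) := by rw [ih a]; exact hb1 _
          _ = po ((i : ℤ) + 1) a a := (porec i 1 a a).symm
    | pred i ih =>
        intro a
        have h1 : pu 1 (pu (-(i : ℤ) - 1) a a) (pu (-(i : ℤ) - 1) a a) = pu (-(i : ℤ)) a a := by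
          have h := purec (-(i : ℤ) - 1) 1 a a
          rw [show (-(i : ℤ) - 1) + 1 = -(i : ℤ) from by ring] at h
          exact h.symm
        have h2 : po 1 (po (-(i : ℤ) - 1) a a) (po (-(i : ℤ) - 1) a a) = po (-(i : ℤ)) a a := by
          have h := porec (-(i : ℤ) - 1) 1 a a
          rw [show (-(i : ℤ) - 1) + 1 = -(i : ℤ) from by ring] at h
          exact h.symm
        have h3 : pu 1 (pu (-(i : ℤ) - 1) a a) (pu (-(i : ℤ) - 1) a a)
            = pu 1 (po (-(i : ℤ) - 1) a a) (po (-(i : ℤ) - 1) a a) := by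
          rw [h1, ih a, ← h2, hb1]
        calc pu (-(i : ℤ) - 1) a a
            = pu (-1) (pu 1 (pu (-(i : ℤ) - 1) a a) (pu (-(i : ℤ) - 1) a a))
                (pu 1 (pu (-(i : ℤ) - 1) a a) (pu (-(i : ℤ) - 1) a a)) := (hpu_can _ _).symm
          _ = pu (-1) (pu 1 (po (-(i : ℤ) - 1) a a) (po (-(i : ℤ) - 1) a a))
                (pu 1 (po (-(i : ℤ) - 1) a a) (po (-(i : ℤ) - 1) a a)) := by rw [h3]
          _ = po (-(i : ℤ) - 1) a a := hpu_can _ _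
  -- trivial base cases
  have hQ0n : ∀ n : ℤ, QQ pu po 0 n := by
    intro n
    refine ⟨fun a b c => ?_, fun a b c => ?_, fun a b c => ?_⟩ <;> simp only [pu0, po0]
  have hQm0 : ∀ m : ℤ, QQ pu po m 0 := by
    intro m
    refine ⟨fun a b c => ?_, fun a b c => ?_, fun a b c => ?_⟩ <;> simp only [pu0, po0]
  have hQ11 : QQ pu po 1 1 := by
    refine ⟨fun a b c => ?_, fun a b c => ?_, fun a b c => ?_⟩ <;> simp only [pu1, po1]
    · exact (B.b3uu a c b).symm
    · exact (B.b3uo a c b).symm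
    · exact B.b3oo a b c
  -- additivity in n
  have haddn : ∀ (m n1 n2 : ℤ), QQ pu po m n1 → QQ pu po m n2 → QQ pu po m (n1 + n2) := by
    rintro m n1 n2 ⟨e1, e2, e3⟩ ⟨f1, f2, f3⟩
    refine ⟨fun a b c => ?_, fun a b c => ?_, fun a b c => ?_⟩
    · calc pu (n1 + n2) (pu m a b) (po m c b)
          = pu n2 (pu n1 (pu m a b) (po m c b)) (pu n1 (po m c b) (po m c b)) := purec n1 n2 _ _
        _ = pu n2 (pu m (pu n1 a c) (pu n1 b c)) (po m (pu n1 c c) (pu n1 b c)) := by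
            rw [e1 a b c, e2 c b c]
        _ = pu m (pu n2 (pu n1 a c) (pu n1 c c)) (pu n2 (pu n1 b c) (pu n1 c c)) := f1 _ _ _
        _ = pu m (pu (n1 + n2) a c) (pu (n1 + n2) b c) := by
            rw [← purec n1 n2 a c, ← purec n1 n2 b c]
    · calc pu (n1 + n2) (po m a b) (po m c b)
          = pu n2 (pu n1 (po m a b) (po m c b)) (pu n1 (po m c b) (po m c b)) := purec n1 n2 _ _
        _ = pu n2 (po m (pu n1 a c) (pu n1 b c)) (po m (pu n1 c c) (pu n1 b c)) := by
            rw [e2 a b c, e2 c b c]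
        _ = po m (pu n2 (pu n1 a c) (pu n1 c c)) (pu n2 (pu n1 b c) (pu n1 c c)) := f2 _ _ _
        _ = po m (pu (n1 + n2) a c) (pu (n1 + n2) b c) := by
            rw [← purec n1 n2 a c, ← purec n1 n2 b c]
    · calc po (n1 + n2) (po m a b) (po m c b)
          = po n2 (po n1 (po m a b) (po m c b)) (po n1 (po m c b) (po m c b)) := porec n1 n2 _ _
        _ = po n2 (po m (po n1 a c) (pu n1 b c)) (po m (po n1 c c) (pu n1 b c)) := by
            rw [e3 a b c, e3 c b c]
        _ = po m (po n2 (po n1 a c) (po n1 c c)) (pu n2 (pu n1 b c) (po n1 c c)) := f3 _ _ _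
        _ = po m (po (n1 + n2) a c) (pu (n1 + n2) b c) := by
            rw [← porec n1 n2 a c, ← hD n1 c, ← purec n1 n2 b c]
  -- additivity in m
  have haddm : ∀ (m1 m2 n : ℤ), QQ pu po m1 n → QQ pu po m2 n → QQ pu po (m1 + m2) n := by
    rintro m1 m2 n ⟨e1, e2, e3⟩ ⟨f1, f2, f3⟩
    refine ⟨fun a b c => ?_, fun a b c => ?_, fun a b c => ?_⟩
    · calc pu n (pu (m1 + m2) a b) (po (m1 + m2) c b)
          = pu n (pu m2 (pu m1 a b) (pu m1 b b)) (po m2 (po m1 c b) (pu m1 b b)) := by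
            rw [purec m1 m2 a b, porec m1 m2 c b, ← hD m1 b]
        _ = pu m2 (pu n (pu m1 a b) (po m1 c b)) (pu n (pu m1 b b) (po m1 c b)) := f1 _ _ _
        _ = pu m2 (pu m1 (pu n a c) (pu n b c)) (pu m1 (pu n b c) (pu n b c)) := by
            rw [e1 a b c, e1 b b c]
        _ = pu (m1 + m2) (pu n a c) (pu n b c) := (purec m1 m2 _ _).symm
    · calc pu n (po (m1 + m2) a b) (po (m1 + m2) c b)
          = pu n (po m2 (po m1 a b) (po m1 b b)) (po m2 (po m1 c b) (po m1 b b)) := by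
            rw [porec m1 m2 a b, porec m1 m2 c b]
        _ = po m2 (pu n (po m1 a b) (po m1 c b)) (pu n (po m1 b b) (po m1 c b)) := f2 _ _ _
        _ = po m2 (po m1 (pu n a c) (pu n b c)) (po m1 (pu n b c) (pu n b c)) := by
            rw [e2 a b c, e2 b b c]
        _ = po (m1 + m2) (pu n a c) (pu n b c) := (porec m1 m2 _ _).symm
    · calc po n (po (m1 + m2) a b) (po (m1 + m2) c b)
          = po n (po m2 (po m1 a b) (po m1 b b)) (po m2 (po m1 c b) (po m1 b b)) := by
            rw [porec m1 m2 a b, porec m1 m2 c b]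
        _ = po m2 (po n (po m1 a b) (po m1 c b)) (pu n (po m1 b b) (po m1 c b)) := f3 _ _ _
        _ = po m2 (po m1 (po n a c) (pu n b c)) (po m1 (pu n b c) (pu n b c)) := by
            rw [e3 a b c, e2 b b c]
        _ = po (m1 + m2) (po n a c) (pu n b c) := (porec m1 m2 _ _).symm
  -- negation in n
  have hnegn : ∀ m : ℤ, QQ pu po m 1 → QQ pu po m (-1) := by
    rintro m ⟨e1, e2, e3⟩
    refine ⟨fun a b c => ?_, fun a b c => ?_, fun a b c => ?_⟩
    · have h1 : pu m a b
          = pu 1 (pu m (pu (-1) a c) (pu (-1) b c)) (po m (pu (-1) c c) (pu (-1) b c)) := by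
        have h := e1 (pu (-1) a c) (pu (-1) b c) (pu (-1) c c)
        rw [hpu_can' a c, hpu_can' b c] at h
        exact h.symm
      have h2 : po m c b
          = pu 1 (po m (pu (-1) c c) (pu (-1) b c)) (po m (pu (-1) c c) (pu (-1) b c)) := by
        have h := e2 (pu (-1) c c) (pu (-1) b c) (pu (-1) c c)
        rw [hpu_can' c c, hpu_can' b c] at h
        exact h.symm
      rw [h1, h2, hpu_can]
    · have h1 : po m a b
          = pu 1 (po m (pu (-1) a c) (pu (-1) b c)) (po m (pu (-1) c c) (pu (-1) b c)) := by
        have h := e2 (pu (-1) a c) (pu (-1) b c) (pu (-1) c c)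
        rw [hpu_can' a c, hpu_can' b c] at h
        exact h.symm
      have h2 : po m c b
          = pu 1 (po m (pu (-1) c c) (pu (-1) b c)) (po m (pu (-1) c c) (pu (-1) b c)) := by
        have h := e2 (pu (-1) c c) (pu (-1) b c) (pu (-1) c c)
        rw [hpu_can' c c, hpu_can' b c] at h
        exact h.symm
      rw [h1, h2, hpu_can]
    · have hceq : pu (-1) c c = po (-1) c c := hD (-1) c
      have hb'' : pu 1 (pu (-1) b c) (po (-1) c c) = b := by
        rw [← hceq]; exact hpu_can' b c
      have h1 : po m a b
          = po 1 (po m (po (-1) a c) (pu (-1) b c)) (po m (po (-1) c c) (pu (-1) b c)) := by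
        have h := e3 (po (-1) a c) (pu (-1) b c) (po (-1) c c)
        rw [hpo_can' a c, hb''] at h
        exact h.symm
      have h2 : po m c b
          = po 1 (po m (po (-1) c c) (pu (-1) b c)) (po m (po (-1) c c) (pu (-1) b c)) := by
        have h := e3 (po (-1) c c) (pu (-1) b c) (po (-1) c c)
        rw [hpo_can' c c, hb''] at h
        exact h.symm
      rw [h1, h2, hpo_can]
  -- negation in m
  have hnegm : ∀ n : ℤ, QQ pu po 1 n → QQ pu po (-1) n := by
    rintro n ⟨e1, e2, e3⟩
    refine ⟨fun a b c => ?_, fun a b c => ?_, fun a b c => ?_⟩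
    · have hbb : pu (-1) b b = po (-1) b b := hD (-1) b
      have hcan4 : po 1 (po (-1) c b) (pu (-1) b b) = c := by
        rw [hbb]; exact hpo_can' c b
      have hX : pu n a c
          = pu 1 (pu n (pu (-1) a b) (po (-1) c b)) (pu n (pu (-1) b b) (po (-1) c b)) := by
        have h := e1 (pu (-1) a b) (pu (-1) b b) (po (-1) c b)
        rw [hpu_can' a b, hcan4] at h
        exact h
      have hY : pu n b c
          = pu 1 (pu n (pu (-1) b b) (po (-1) c b)) (pu n (pu (-1) b b) (po (-1) c b)) := by
        have h := e1 (pu (-1) b b) (pu (-1) b b) (po (-1) c b)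
        rw [hpu_can' b b, hcan4] at h
        exact h
      rw [hX, hY, hpu_can]
    · have hX : pu n a c
          = po 1 (pu n (po (-1) a b) (po (-1) c b)) (pu n (po (-1) b b) (po (-1) c b)) := by
        have h := e2 (po (-1) a b) (po (-1) b b) (po (-1) c b)
        rw [hpo_can' a b, hpo_can' c b] at h
        exact h
      have hY : pu n b c
          = po 1 (pu n (po (-1) b b) (po (-1) c b)) (pu n (po (-1) b b) (po (-1) c b)) := by
        have h := e2 (po (-1) b b) (po (-1) b b) (po (-1) c b)
        rw [hpo_can' b b, hpo_can' c b] at h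
        exact h
      rw [hX, hY, hpo_can]
    · have hX : po n a c
          = po 1 (po n (po (-1) a b) (po (-1) c b)) (pu n (po (-1) b b) (po (-1) c b)) := by
        have h := e3 (po (-1) a b) (po (-1) b b) (po (-1) c b)
        rw [hpo_can' a b, hpo_can' c b] at h
        exact h
      have hY : pu n b c
          = po 1 (pu n (po (-1) b b) (po (-1) c b)) (pu n (po (-1) b b) (po (-1) c b)) := by
        have h := e2 (po (-1) b b) (po (-1) b b) (po (-1) c b)
        rw [hpo_can' b b, hpo_can' c b] at h
        exact h
      rw [hX, hY, hpo_can]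
  -- exchange identities for m = 1 and all n
  have hQ1n : ∀ n : ℤ, QQ pu po 1 n := by
    intro n
    induction n using Int.induction_on with
    | zero => exact hQm0 1
    | succ i ih => exact haddn 1 i 1 ih hQ11
    | pred i ih =>
        have h := haddn 1 (-(i : ℤ)) (-1) ih (hnegn 1 hQ11)
        rwa [show -(i : ℤ) + -1 = -(i : ℤ) - 1 from by ring] at h
  -- exchange identities everywhere
  have hQ : ∀ (m n : ℤ), QQ pu po m n := by
    intro m n
    induction m using Int.induction_on with
    | zero => exact hQ0n n
    | succ i ih => exact haddm i 1 n ih (hQ1n n)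
    | pred i ih =>
        have h := haddm (-(i : ℤ)) (-1) n ih (hnegm n (hQ1n n))
        rwa [show -(i : ℤ) + -1 = -(i : ℤ) - 1 from by ring] at h
  exact ⟨fun m n => (hQ m n).1, fun m n => (hQ m n).2.1, fun m n => (hQ m n).2.2, hD⟩
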